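/- Let G be a graph with orientation ρ. The spanning subgraph B(G,ρ) formed by the union of all directed bonds of (G,ρ) is acyclic, i.e., contains no directed circuit. -/

import Mathlib

/-- A directed circuit of the digraph given by `tl, hd : E → V`: a cyclically
ordered nonempty list of distinct edges with distinct vertices, each edge's head
being the next edge's tail. `C` is its edge set. -/
def IsDirectedCircuit {V E : Type} (tl hd : E → V) (C : Set E) : Prop :=
  ∃ l : List E, l ≠ [] ∧ l.Nodup ∧ (l.map tl).Nodup ∧ C = {e | e ∈ l} ∧
    ∀ i : Fin l.length,
      hd (l.get i) = tl (l.get ⟨(i.1 + 1) % l.length, Nat.mod_lt _ i.pos⟩)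

/-- The set of edges between `S` and its complement. -/
def cutSet {V E : Type} (tl hd : E → V) (S : Set V) : Set E :=
  {e | (tl e ∈ S ∧ hd e ∉ S) ∨ (tl e ∉ S ∧ hd e ∈ S)}

/-- A cut: a nonempty edge set of the form `[S, Sᶜ]`. -/
def IsCut {V E : Type} (tl hd : E → V) (C : Set E) : Prop :=
  ∃ S : Set V, C = cutSet tl hd S ∧ C.Nonempty

/-- A bond: a cut not properly containing any cut. -/
def IsBond {V E : Type} (tl hd : E → V) (C : Set E) : Prop :=
  IsCut tl hd C ∧ ∀ C', IsCut tl hd C' → C' ⊆ C → C' = C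

/-- A directed bond: a bond all of whose edges are oriented from `S` to `Sᶜ`. -/
def IsDirectedBond {V E : Type} (tl hd : E → V) (C : Set E) : Prop :=
  IsBond tl hd C ∧ ∃ S : Set V, C = cutSet tl hd S ∧ ∀ e ∈ C, tl e ∈ S ∧ hd e ∉ S

/-- `B_ρ`: the union of the edge sets of all directed bonds. -/
def bondUnion {V E : Type} (tl hd : E → V) : Set E :=
  {e | ∃ C, IsDirectedBond tl hd C ∧ e ∈ C}

/-- The spanning subgraph `B(G,ρ)` formed by the union of all directed bonds is
acyclic: it contains no directed circuit. -/
theorem stmt0 {V E : Type} [Fintype V] [Fintype E] (tl hd : E → V) :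
    ¬ ∃ C : Set E, IsDirectedCircuit tl hd C ∧ C ⊆ bondUnion tl hd := by
  classical
  rintro ⟨C, ⟨l, hne, _, _, hC, hcyc⟩, hsub⟩
  have pos : 0 < l.length := List.length_pos_iff.mpr hne
  have h0 : l.get ⟨0, pos⟩ ∈ C := by rw [hC]; exact List.get_mem l ⟨0, pos⟩
  obtain ⟨B, ⟨hBbond, S, hBS, hdir⟩, he0B⟩ := hsub h0
  have htl0 : tl (l.get ⟨0, pos⟩) ∈ S := (hdir _ he0B).1
  have hd0 : hd (l.get ⟨0, pos⟩) ∉ S := (hdir _ he0B).2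
  let P : ℕ → Prop := fun m => tl (l.get ⟨(1 + m) % l.length, Nat.mod_lt _ pos⟩) ∈ S
  have hPstart : P (l.length - 1) := by
    have h1 : (1 + (l.length - 1)) % l.length = 0 := by
      rw [show 1 + (l.length - 1) = l.length from by omega]; exact Nat.mod_self _
    show tl (l.get ⟨(1 + (l.length - 1)) % l.length, Nat.mod_lt _ pos⟩) ∈ S
    have : (⟨(1 + (l.length - 1)) % l.length, Nat.mod_lt _ pos⟩ : Fin l.length) = ⟨0, pos⟩ :=
      Fin.mk_eq_mk.mpr h1
    rw [this]; exact htl0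
  have hP0 : ¬ P 0 := by
    have hc := hcyc ⟨0, pos⟩
    show tl (l.get ⟨(1 + 0) % l.length, Nat.mod_lt _ pos⟩) ∉ S
    have : (⟨(1 + 0) % l.length, Nat.mod_lt _ pos⟩ : Fin l.length)
        = ⟨(0 + 1) % l.length, Nat.mod_lt _ pos⟩ := Fin.mk_eq_mk.mpr (by norm_num)
    rw [this, ← hc]; exact hd0
  have hex : ∃ m, P m := ⟨l.length - 1, hPstart⟩
  set m := Nat.find hex with hm
  have hPm : P m := Nat.find_spec hex
  have hmne : m ≠ 0 := by intro h; exact hP0 (h ▸ hPm)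
  have hPm1 : ¬ P (m - 1) := Nat.find_min hex (by omega)
  set k : Fin l.length := ⟨(1 + (m - 1)) % l.length, Nat.mod_lt _ pos⟩ with hk
  have htlk : tl (l.get k) ∉ S := hPm1
  have hdk : hd (l.get k) ∈ S := by
    have hc := hcyc k
    have : (⟨(k.1 + 1) % l.length, Nat.mod_lt _ k.pos⟩ : Fin l.length)
        = ⟨(1 + m) % l.length, Nat.mod_lt _ pos⟩ := by
      rw [Fin.mk_eq_mk]
      show ((1 + (m - 1)) % l.length + 1) % l.length = (1 + m) % l.length
      rw [Nat.mod_add_mod]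
      congr 1
      omega
    rw [hc, this]
    exact hPm
  have hkB : l.get k ∈ B := by
    rw [hBS]
    exact Or.inr ⟨htlk, hdk⟩
  exact htlk (hdir _ hkB).1
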